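/- arXiv:2401.14380 — 8 statements merged into one kernel-verified Lean document; each statement's English description precedes it below -/
import Mathlib

section
/- Let Γ be a simple graph on [n]. For every w ∈ S_n and every spline ρ on Γ, the function v ↦ w(ρ(w⁻¹v)) (where w acts on the polynomial ρ(w⁻¹v) by permuting variables) is again a spline on Γ; that is, the dot action of S_n preserves Splines(Γ). -/
open MvPolynomial

/-- A spline on a simple graph `Γ` on `[n]`. -/
def IsSpline {n : ℕ} (Γ : SimpleGraph (Fin n))
    (ρ : Equiv.Perm (Fin n) → MvPolynomial (Fin n) ℂ) : Prop :=
  ∀ (w : Equiv.Perm (Fin n)) (i j : Fin n), Γ.Adj i j →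
    ρ w - ρ (w * Equiv.swap i j) ∈
      Ideal.span {(X (w i) - X (w j) : MvPolynomial (Fin n) ℂ)}

/-- The dot action of `S_n` on functions `S_n → ℂ[t]`: `(w·ρ)(v) = w(ρ(w⁻¹ v))`, where
`w` acts on polynomials by permuting variables. -/
noncomputable def dotAction {n : ℕ} (w : Equiv.Perm (Fin n))
    (ρ : Equiv.Perm (Fin n) → MvPolynomial (Fin n) ℂ) :
    Equiv.Perm (Fin n) → MvPolynomial (Fin n) ℂ :=
  fun v => rename (⇑w) (ρ (w⁻¹ * v))

/-- The dot action of `S_n` preserves the set of splines on `Γ`. -/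
theorem dotAction_isSpline {n : ℕ} (Γ : SimpleGraph (Fin n)) (w : Equiv.Perm (Fin n))
    (ρ : Equiv.Perm (Fin n) → MvPolynomial (Fin n) ℂ) (hρ : IsSpline Γ ρ) :
    IsSpline Γ (dotAction w ρ) := by
  intro v i j hij
  have h := hρ (w⁻¹ * v) i j hij
  rw [Ideal.mem_span_singleton] at h ⊢
  obtain ⟨c, hc⟩ := h
  refine ⟨rename (⇑w) c, ?_⟩
  have : dotAction w ρ v - dotAction w ρ (v * Equiv.swap i j)
      = rename (⇑w) (ρ (w⁻¹ * v) - ρ (w⁻¹ * v * Equiv.swap i j)) := by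
    simp [dotAction, map_sub, mul_assoc]
  rw [this, hc, map_mul, map_sub, rename_X, rename_X]
  simp [Equiv.Perm.mul_apply]
end

section
/- Let Γ and Γ' be simple graphs on [n] and let ω ∈ S_n be a graph isomorphism from Γ to Γ' (i.e., {i,j} ∈ E(Γ) iff {ω(i),ω(j)} ∈ E(Γ')). Define Ω by Ω(ρ)(v) := ω(ρ(ω⁻¹vω)) for ρ : S_n → ℂ[t] and v ∈ S_n. Then Ω maps Splines(Γ) into Splines(Γ'), and Ω : Splines(Γ) → Splines(Γ') is a ring isomorphism (with respect to pointwise addition and multiplication). -/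
open MvPolynomial

/-- The map `Ω` induced by a permutation `ω`: `Ω(ρ)(v) = ω(ρ(ω⁻¹ v ω))`. -/
noncomputable def OmegaMap {n : ℕ} (ω : Equiv.Perm (Fin n))
    (ρ : Equiv.Perm (Fin n) → MvPolynomial (Fin n) ℂ) :
    Equiv.Perm (Fin n) → MvPolynomial (Fin n) ℂ :=
  fun v => rename (⇑ω) (ρ (ω⁻¹ * v * ω))

lemma OmegaMap_spline {n : ℕ} (Γ Γ' : SimpleGraph (Fin n)) (ω : Equiv.Perm (Fin n))
    (hω : ∀ i j : Fin n, Γ.Adj i j ↔ Γ'.Adj (ω i) (ω j))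
    (ρ : Equiv.Perm (Fin n) → MvPolynomial (Fin n) ℂ) (hρ : IsSpline Γ ρ) :
    IsSpline Γ' (OmegaMap ω ρ) := by
  intro v i j hij
  have hadj : Γ.Adj (ω⁻¹ i) (ω⁻¹ j) := by
    rw [hω]; simpa using hij
  have hmem := hρ (ω⁻¹ * v * ω) (ω⁻¹ i) (ω⁻¹ j) hadj
  rw [Ideal.mem_span_singleton] at hmem ⊢
  obtain ⟨p, hp⟩ := hmem
  have hswap : Equiv.swap (ω⁻¹ i) (ω⁻¹ j) = ω⁻¹ * Equiv.swap i j * ω := by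
    simpa using Equiv.swap_apply_apply ω⁻¹ i j
  have hgroup : ω⁻¹ * (v * Equiv.swap i j) * ω
      = (ω⁻¹ * v * ω) * Equiv.swap (ω⁻¹ i) (ω⁻¹ j) := by
    rw [hswap]; group
  have key : OmegaMap ω ρ v - OmegaMap ω ρ (v * Equiv.swap i j)
      = rename (⇑ω) (ρ (ω⁻¹ * v * ω) - ρ ((ω⁻¹ * v * ω) * Equiv.swap (ω⁻¹ i) (ω⁻¹ j))) := by
    simp [OmegaMap, hgroup, map_sub]
  rw [key, hp]
  refine ⟨rename (⇑ω) p, ?_⟩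
  have : (rename (⇑ω)) (X ((ω⁻¹ * v * ω) (ω⁻¹ i)) - X ((ω⁻¹ * v * ω) (ω⁻¹ j)))
      = (X (v i) - X (v j) : MvPolynomial (Fin n) ℂ) := by
    simp [Equiv.Perm.mul_apply]
  rw [map_mul, this, mul_comm]

lemma OmegaMap_inv {n : ℕ} (ω : Equiv.Perm (Fin n))
    (ρ : Equiv.Perm (Fin n) → MvPolynomial (Fin n) ℂ) :
    OmegaMap ω⁻¹ (OmegaMap ω ρ) = ρ := by
  funext v
  simp only [OmegaMap, inv_inv]
  have h1 : ω⁻¹ * (ω * v * ω⁻¹) * ω = v := by group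
  rw [h1, rename_rename]
  have : ⇑ω⁻¹ ∘ ⇑ω = id := by ext x; simp
  rw [this, rename_id, AlgHom.id_apply]

/-- If `ω` is a graph isomorphism from `Γ` to `Γ'`, then `Ω` maps splines on `Γ` to splines
on `Γ'`, and `Ω : Splines(Γ) → Splines(Γ')` is a ring isomorphism: it is additive,
multiplicative, unital (with respect to pointwise operations) and restricts to a bijection
from the set of splines on `Γ` onto the set of splines on `Γ'`. -/
theorem OmegaMap_ring_iso {n : ℕ} (Γ Γ' : SimpleGraph (Fin n)) (ω : Equiv.Perm (Fin n))
    (hω : ∀ i j : Fin n, Γ.Adj i j ↔ Γ'.Adj (ω i) (ω j)) :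
    (∀ ρ, IsSpline Γ ρ → IsSpline Γ' (OmegaMap ω ρ)) ∧
    (∀ ρ σ : Equiv.Perm (Fin n) → MvPolynomial (Fin n) ℂ,
        OmegaMap ω (ρ + σ) = OmegaMap ω ρ + OmegaMap ω σ) ∧
    (∀ ρ σ : Equiv.Perm (Fin n) → MvPolynomial (Fin n) ℂ,
        OmegaMap ω (ρ * σ) = OmegaMap ω ρ * OmegaMap ω σ) ∧
    (OmegaMap ω (1 : Equiv.Perm (Fin n) → MvPolynomial (Fin n) ℂ) = 1) ∧
    Set.BijOn (OmegaMap ω) {ρ | IsSpline Γ ρ} {ρ | IsSpline Γ' ρ} := by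
  have hω' : ∀ i j : Fin n, Γ'.Adj i j ↔ Γ.Adj (ω⁻¹ i) (ω⁻¹ j) := by
    intro i j; rw [hω]; simp
  refine ⟨OmegaMap_spline Γ Γ' ω hω, ?_, ?_, ?_, ?_, ?_, ?_⟩
  · intro ρ σ; funext v; simp [OmegaMap, map_add]
  · intro ρ σ; funext v; simp [OmegaMap, map_mul]
  · funext v; simp [OmegaMap]
  · exact fun ρ hρ => OmegaMap_spline Γ Γ' ω hω ρ hρ
  · intro ρ _ σ _ h
    have := congrArg (OmegaMap ω⁻¹) h
    rwa [OmegaMap_inv, OmegaMap_inv] at this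
  · intro τ hτ
    refine ⟨OmegaMap ω⁻¹ τ, ?_, ?_⟩
    · exact OmegaMap_spline Γ' Γ ω⁻¹ (fun i j => hω' i j) τ hτ
    · have : OmegaMap ω (OmegaMap ω⁻¹ τ) = τ := by
        have := OmegaMap_inv ω⁻¹ τ
        simpa using this
      exact this
end

section
/- Let Γ and Γ' be simple graphs on [n], let ω ∈ S_n be a graph isomorphism from Γ to Γ', and let Ω : Splines(Γ) → Splines(Γ') be defined by Ω(ρ)(v) = ω(ρ(ω⁻¹vω)). Then Ω intertwines the dot action of S_n with the ω-twisted dot action: for every u ∈ S_n and every spline ρ on Γ, Ω(u·ρ) = (ωuω⁻¹)·Ω(ρ). -/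
open MvPolynomial

/-- If `ω : Γ → Γ'` is a graph isomorphism, then `Ω` intertwines the dot action of `S_n`
with the `ω`-twisted dot action: `Ω(u·ρ) = (ωuω⁻¹)·Ω(ρ)` for every `u ∈ S_n` and every
spline `ρ` on `Γ`. -/
theorem OmegaMap_intertwines_dotAction {n : ℕ} (Γ Γ' : SimpleGraph (Fin n))
    (ω : Equiv.Perm (Fin n))
    (hω : ∀ i j : Fin n, Γ.Adj i j ↔ Γ'.Adj (ω i) (ω j))
    (u : Equiv.Perm (Fin n))
    (ρ : Equiv.Perm (Fin n) → MvPolynomial (Fin n) ℂ) (hρ : IsSpline Γ ρ) :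
    OmegaMap ω (dotAction u ρ) = dotAction (ω * u * ω⁻¹) (OmegaMap ω ρ) := by
  funext v
  simp only [OmegaMap, dotAction, rename_rename]
  congr 1
  · ext x; simp [Equiv.Perm.mul_apply]
  · congr 1; group
end

section
/- Let Γ be a connected simple graph on [n]. The ℂ[t]-submodule of Splines(Γ) (under the left action f.ρ = (w ↦ f·ρ(w))) generated by the set of splines ρ such that every value ρ(w) is a polynomial of degree at most 1 is a free ℂ[t]-module. -/
open MvPolynomial

namespace SplineFree

variable {n : ℕ}

lemma degLeOne_cases (d : Fin n →₀ ℕ) (hd : (d.sum fun _ e => e) ≤ 1) :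
    d = 0 ∨ ∃ m, d = Finsupp.single m 1 := by
  rcases eq_or_ne d 0 with h | h
  · exact Or.inl h
  right
  obtain ⟨m, hm⟩ : ∃ m, d m ≠ 0 := by
    by_contra hc; push_neg at hc; exact h (Finsupp.ext fun x => hc x)
  have hmem : m ∈ d.support := Finsupp.mem_support_iff.mpr hm
  have hsum : (d.sum fun _ e => e) = ∑ x ∈ d.support, d x := rfl
  have hdm : d m ≤ 1 := by
    refine le_trans ?_ hd
    rw [hsum]
    exact Finset.single_le_sum (fun i _ => Nat.zero_le _) hmem
  have hkey : ∀ x, x ≠ m → d x = 0 := by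
    intro x hx
    by_contra hdx
    have hxmem : x ∈ d.support := Finsupp.mem_support_iff.mpr hdx
    have hsub : ({m, x} : Finset (Fin n)) ⊆ d.support := by
      intro y hy
      rcases Finset.mem_insert.mp hy with rfl | hy
      · exact hmem
      · rwa [Finset.mem_singleton.mp hy]
    have h2 : d m + d x ≤ 1 := by
      calc d m + d x = ∑ y ∈ ({m, x} : Finset (Fin n)), d y := (Finset.sum_pair (Ne.symm hx)).symm
        _ ≤ ∑ y ∈ d.support, d y := Finset.sum_le_sum_of_subset hsub
        _ ≤ 1 := by rw [← hsum]; exact hd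
    omega
  refine ⟨m, Finsupp.ext fun x => ?_⟩
  rcases eq_or_ne x m with rfl | hx
  · simp only [Finsupp.single_eq_same]; omega
  · rw [hkey x hx, Finsupp.single_apply, if_neg (Ne.symm hx)]

lemma eq_C_add_sum {p : MvPolynomial (Fin n) ℂ} (hp : p.totalDegree ≤ 1) :
    p = C (coeff 0 p) + ∑ m : Fin n, C (coeff (Finsupp.single m 1) p) * X m := by
  apply MvPolynomial.ext
  intro d
  rw [coeff_add, coeff_sum]
  simp only [coeff_C_mul, coeff_X', coeff_C]
  rcases eq_or_ne d 0 with rfl | hd0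
  · rw [if_pos rfl]
    rw [Finset.sum_eq_zero, add_zero]
    intro m _
    rw [if_neg (by simpa using Finsupp.single_ne_zero.mpr (one_ne_zero (α := ℕ))), mul_zero]
  rw [if_neg (by exact fun h => hd0 h.symm), zero_add]
  by_cases hsing : ∃ m, d = Finsupp.single m 1
  · obtain ⟨m', rfl⟩ := hsing
    rw [Finset.sum_eq_single m'
      (fun m _ hmm => by
        rw [if_neg fun h => hmm ((Finsupp.single_left_inj (one_ne_zero (α := ℕ))).mp h),
          mul_zero])
      (fun h => absurd (Finset.mem_univ m') h)]
    simp
  · have hns : d ∉ p.support := by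
      intro hmem
      have := le_trans (le_totalDegree hmem) hp
      rcases degLeOne_cases d this with h | h
      · exact hd0 h
      · exact hsing h
    rw [notMem_support_iff.mp hns]
    rw [Finset.sum_eq_zero]
    intro m _
    rw [if_neg fun h => hsing ⟨m, h.symm⟩, mul_zero]


lemma coeff_zero_mul_X (r : MvPolynomial (Fin n) ℂ) (i : Fin n) :
    coeff 0 (r * X i) = 0 := by
  classical
  rw [coeff_mul_X']
  simp

lemma coeff_single_mul_X (r : MvPolynomial (Fin n) ℂ) {m i : Fin n} (hmi : m ≠ i) :
    coeff (Finsupp.single m 1) (r * X i) = 0 := by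
  classical
  rw [coeff_mul_X']
  rw [if_neg]
  rw [Finsupp.support_single_ne_zero m (one_ne_zero (α := ℕ))]
  simpa using Ne.symm hmi

lemma coeff_single_mul_X_self (r : MvPolynomial (Fin n) ℂ) (i : Fin n) :
    coeff (Finsupp.single i 1) (r * X i) = coeff 0 r := by
  classical
  rw [coeff_mul_X']
  rw [if_pos]
  · simp
  · rw [Finsupp.support_single_ne_zero i (one_ne_zero (α := ℕ))]
    simp

lemma X_sub_X_ne_zero {i j : Fin n} (hij : i ≠ j) :
    (X i - X j : MvPolynomial (Fin n) ℂ) ≠ 0 := by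
  intro h
  have h1 : coeff (Finsupp.single i 1) (X i - X j : MvPolynomial (Fin n) ℂ) = 1 := by
    rw [coeff_sub, coeff_X_same, coeff_X, if_neg, sub_zero]
    exact fun hh => hij ((Finsupp.single_left_inj (one_ne_zero (α := ℕ))).mp hh).symm
  rw [h] at h1
  simp at h1

lemma edge_scalar {i j : Fin n} (hij : i ≠ j) {p : MvPolynomial (Fin n) ℂ}
    (hmem : p ∈ Ideal.span {(X i - X j : MvPolynomial (Fin n) ℂ)})
    (hdeg : p.totalDegree ≤ 1) :
    ∃ c : ℂ, p = C c * (X i - X j) := by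
  obtain ⟨r, hr⟩ := Ideal.mem_span_singleton.mp hmem
  rw [mul_comm] at hr
  refine ⟨coeff 0 r, ?_⟩
  have h0 : coeff 0 p = 0 := by
    rw [hr, mul_sub, coeff_sub, coeff_zero_mul_X, coeff_zero_mul_X, sub_zero]
  have hi : coeff (Finsupp.single i 1) p = coeff 0 r := by
    rw [hr, mul_sub, coeff_sub, coeff_single_mul_X_self, coeff_single_mul_X r hij, sub_zero]
  have hj : coeff (Finsupp.single j 1) p = -coeff 0 r := by
    rw [hr, mul_sub, coeff_sub, coeff_single_mul_X_self, coeff_single_mul_X r (Ne.symm hij),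
      zero_sub]
  have hm : ∀ m : Fin n, m ≠ i → m ≠ j → coeff (Finsupp.single m 1) p = 0 := by
    intro m hmi hmj
    rw [hr, mul_sub, coeff_sub, coeff_single_mul_X r hmi, coeff_single_mul_X r hmj, sub_zero]
  have hexp := eq_C_add_sum hdeg
  rw [h0] at hexp
  rw [hexp]
  have hsum : ∀ m : Fin n, C (coeff (Finsupp.single m 1) p) * X m
      = (if m = i then C (coeff 0 r) * X i else 0)
        + (if m = j then -(C (coeff 0 r) * X j) else 0) := by
    intro m
    rcases eq_or_ne m i with rfl | hmi
    · rw [if_pos rfl, if_neg hij, hi, add_zero]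
    rcases eq_or_ne m j with rfl | hmj
    · rw [if_neg hmi, if_pos rfl, hj, zero_add, map_neg, neg_mul]
    · rw [if_neg hmi, if_neg hmj, hm m hmi hmj, map_zero, zero_mul, add_zero]
  rw [Finset.sum_congr rfl (fun m _ => hsum m), Finset.sum_add_distrib,
    Finset.sum_ite_eq' Finset.univ i, Finset.sum_ite_eq' Finset.univ j]
  simp only [Finset.mem_univ, if_pos]
  rw [map_zero, zero_add]
  ring

variable {Γ : SimpleGraph (Fin n)}

lemma closure_edge_swaps (hΓ : Γ.Connected) :
    Subgroup.closure {σ : Equiv.Perm (Fin n) | ∃ i j, Γ.Adj i j ∧ σ = Equiv.swap i j} = ⊤ := by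
  classical
  set S : Set (Equiv.Perm (Fin n)) :=
    {σ : Equiv.Perm (Fin n) | ∃ i j, Γ.Adj i j ∧ σ = Equiv.swap i j} with hS
  have hSswap : ∀ f ∈ S, f.IsSwap := by
    rintro f ⟨i, j, hadj, rfl⟩
    exact ⟨i, j, hadj.ne, rfl⟩
  have horb : ∀ a b : Fin n, Γ.Reachable a b →
      a ∈ MulAction.orbit (Subgroup.closure S) b := by
    intro a b hab
    obtain ⟨wk⟩ := hab
    induction wk with
    | nil => exact MulAction.mem_orbit_self _
    | @cons u x v hadj pth ih =>
      obtain ⟨g, hg⟩ := ih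
      refine ⟨⟨Equiv.swap u x, Subgroup.subset_closure ⟨u, x, hadj, rfl⟩⟩ * g, ?_⟩
      have : (g : Equiv.Perm (Fin n)) • v = x := hg
      show (Equiv.swap u x * (g : Equiv.Perm (Fin n))) • v = u
      rw [mul_smul, this]
      exact Equiv.swap_apply_right u x
  rw [Subgroup.eq_top_iff']
  intro f
  rw [mem_closure_isSwap hSswap]
  exact ⟨Set.toFinite _, fun x => horb (f x) x (hΓ.preconnected (f x) x)⟩

lemma const_of_edge_inv (hΓ : Γ.Connected) {α : Sort*} (H : Equiv.Perm (Fin n) → α)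
    (hH : ∀ (w : Equiv.Perm (Fin n)) (i j : Fin n), Γ.Adj i j →
      H (w * Equiv.swap i j) = H w) :
    ∀ w w', H w = H w' := by
  intro w w'
  let T : Subgroup (Equiv.Perm (Fin n)) :=
    { carrier := {σ | ∀ u, H (u * σ) = H u}
      one_mem' := fun u => by rw [mul_one]
      mul_mem' := by
        intro a b ha hb u
        rw [← mul_assoc, hb (u * a), ha u]
      inv_mem' := by
        intro a ha u
        have := ha (u * a⁻¹)
        rw [inv_mul_cancel_right] at this
        exact this.symm }
  have hT : Subgroup.closure {σ : Equiv.Perm (Fin n) | ∃ i j, Γ.Adj i j ∧ σ = Equiv.swap i j}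
      ≤ T := by
    rw [Subgroup.closure_le]
    rintro σ ⟨i, j, hadj, rfl⟩
    exact fun u => hH u i j hadj
  rw [closure_edge_swaps hΓ] at hT
  have hmem : (w⁻¹ * w') ∈ T := hT (Subgroup.mem_top _)
  have := hmem w
  rw [mul_inv_cancel_left] at this
  exact this.symm


/-- The set of degree-at-most-one splines, as a `ℂ`-submodule. -/
noncomputable def splineSub (Γ : SimpleGraph (Fin n)) :
    Submodule ℂ (Equiv.Perm (Fin n) → MvPolynomial (Fin n) ℂ) where
  carrier := {ρ | IsSpline Γ ρ ∧ ∀ w, (ρ w).totalDegree ≤ 1}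
  add_mem' := by
    rintro ρ ρ' ⟨hs, hd⟩ ⟨hs', hd'⟩
    refine ⟨fun w i j hadj => ?_, fun w => ?_⟩
    · have heq : (ρ + ρ') w - (ρ + ρ') (w * Equiv.swap i j)
          = (ρ w - ρ (w * Equiv.swap i j)) + (ρ' w - ρ' (w * Equiv.swap i j)) := by
        simp only [Pi.add_apply]; ring
      rw [heq]
      exact Ideal.add_mem _ (hs w i j hadj) (hs' w i j hadj)
    · exact le_trans (totalDegree_add _ _) (max_le (hd w) (hd' w))
  zero_mem' := by
    refine ⟨fun w i j hadj => ?_, fun w => ?_⟩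
    · simp only [Pi.zero_apply, sub_self]
      exact Ideal.zero_mem _
    · simp
  smul_mem' := by
    rintro c ρ ⟨hs, hd⟩
    refine ⟨fun w i j hadj => ?_, fun w => ?_⟩
    · have heq : (c • ρ) w - (c • ρ) (w * Equiv.swap i j)
          = C c * (ρ w - ρ (w * Equiv.swap i j)) := by
        simp only [Pi.smul_apply, smul_eq_C_mul]; ring
      rw [heq]
      exact Ideal.mul_mem_left _ _ (hs w i j hadj)
    · exact le_trans (totalDegree_smul_le c (ρ w)) (hd w)

lemma one_mem_splineSub (Γ : SimpleGraph (Fin n)) :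
    (1 : Equiv.Perm (Fin n) → MvPolynomial (Fin n) ℂ) ∈ splineSub Γ := by
  refine ⟨fun w i j hadj => ?_, fun w => ?_⟩
  · simp only [Pi.one_apply, sub_self]
    exact Ideal.zero_mem _
  · simp

lemma constX_mem_splineSub (Γ : SimpleGraph (Fin n)) (m : Fin n) :
    (fun _ => X m : Equiv.Perm (Fin n) → MvPolynomial (Fin n) ℂ) ∈ splineSub Γ := by
  refine ⟨fun w i j hadj => ?_, fun w => ?_⟩
  · simp only [sub_self]
    exact Ideal.zero_mem _
  · simp [totalDegree_X]

/-- The submodule of constant spline functions of degree ≤ 1. -/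
noncomputable def constSub (n : ℕ) : Submodule ℂ (Equiv.Perm (Fin n) → MvPolynomial (Fin n) ℂ) :=
  Submodule.span ℂ
    ({(1 : Equiv.Perm (Fin n) → MvPolynomial (Fin n) ℂ)}
      ∪ Set.range (fun m : Fin n => (fun _ => X m : Equiv.Perm (Fin n) → MvPolynomial (Fin n) ℂ)))

lemma const_mem_constSub {p : MvPolynomial (Fin n) ℂ} (hp : p.totalDegree ≤ 1) :
    (fun _ => p : Equiv.Perm (Fin n) → MvPolynomial (Fin n) ℂ) ∈ constSub n := by
  have heq : (fun _ => p : Equiv.Perm (Fin n) → MvPolynomial (Fin n) ℂ)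
      = (coeff 0 p) • (1 : Equiv.Perm (Fin n) → MvPolynomial (Fin n) ℂ)
        + ∑ m : Fin n, (coeff (Finsupp.single m 1) p)
            • (fun _ => X m : Equiv.Perm (Fin n) → MvPolynomial (Fin n) ℂ) := by
    funext w
    simp only [Pi.add_apply, Pi.smul_apply, Pi.one_apply, Finset.sum_apply, smul_eq_C_mul,
      mul_one]
    exact eq_C_add_sum hp
  rw [heq]
  refine Submodule.add_mem _ (Submodule.smul_mem _ _ (Submodule.subset_span (Or.inl rfl))) ?_
  exact Submodule.sum_mem _ fun m _ =>
    Submodule.smul_mem _ _ (Submodule.subset_span (Or.inr ⟨m, rfl⟩))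

lemma constSub_le (Γ : SimpleGraph (Fin n)) : constSub n ≤ splineSub Γ := by
  rw [constSub, Submodule.span_le]
  rintro ρ (rfl | ⟨m, rfl⟩)
  · exact one_mem_splineSub Γ
  · exact constX_mem_splineSub Γ m

lemma slice_const (hΓ : Γ.Connected) {κ : Type*} (s : Finset κ)
    (b : κ → (Equiv.Perm (Fin n) → MvPolynomial (Fin n) ℂ))
    (hb : ∀ k ∈ s, b k ∈ splineSub Γ)
    (f : MvPolynomial (Fin n) ℂ) (lam : κ → MvPolynomial (Fin n) ℂ)
    (h : ∀ w, f + ∑ k ∈ s, lam k * b k w = 0)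
    (μ : Fin n →₀ ℕ) (w w' : Equiv.Perm (Fin n)) :
    ∑ k ∈ s, coeff μ (lam k) • b k w = ∑ k ∈ s, coeff μ (lam k) • b k w' := by
  classical
  have hedge : ∀ (d : Fin n →₀ ℕ) (u : Equiv.Perm (Fin n)) (i j : Fin n), Γ.Adj i j →
      (∑ k ∈ s, lam k * C (coeff d (b k (u * Equiv.swap i j))))
        = ∑ k ∈ s, lam k * C (coeff d (b k u)) := by
    intro d u i j hadj
    have hij : u i ≠ u j := fun hh => Γ.ne_of_adj hadj (u.injective hh)
    have hcex : ∀ k, k ∈ s → ∃ c : ℂ,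
        b k u - b k (u * Equiv.swap i j) = C c * (X (u i) - X (u j)) := by
      intro k hk
      obtain ⟨hsp, hd⟩ := hb k hk
      refine edge_scalar hij (hsp u i j hadj) ?_
      exact le_trans (totalDegree_sub _ _) (max_le (hd u) (hd _))
    set c : κ → ℂ := fun k =>
      if hk : k ∈ s then Classical.choose (hcex k hk) else 0 with hc
    have hcs : ∀ k ∈ s, b k u - b k (u * Equiv.swap i j) = C (c k) * (X (u i) - X (u j)) := by
      intro k hk
      rw [hc]; simp only [dif_pos hk]
      exact Classical.choose_spec (hcex k hk)
    have hz : (∑ k ∈ s, lam k * C (c k)) = 0 := by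
      have hdiff : ∑ k ∈ s, lam k * (b k u - b k (u * Equiv.swap i j)) = 0 := by
        have h1 := h u
        have h2 := h (u * Equiv.swap i j)
        have : ∑ k ∈ s, (lam k * b k u - lam k * b k (u * Equiv.swap i j)) = 0 := by
          rw [Finset.sum_sub_distrib]
          linear_combination h1 - h2
        rw [← this]
        exact Finset.sum_congr rfl fun k _ => by ring
      have hfact : (∑ k ∈ s, lam k * C (c k)) * (X (u i) - X (u j)) = 0 := by
        rw [Finset.sum_mul, ← hdiff]
        refine Finset.sum_congr rfl fun k hk => ?_
        rw [hcs k hk]; ring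
      rcases mul_eq_zero.mp hfact with h' | h'
      · exact h'
      · exact absurd h' (X_sub_X_ne_zero hij)
    have : ∀ k ∈ s, lam k * C (coeff d (b k (u * Equiv.swap i j)))
        = lam k * C (coeff d (b k u))
          - (lam k * C (c k)) * C (coeff d (X (u i) - X (u j))) := by
      intro k hk
      have hbk : b k (u * Equiv.swap i j)
          = b k u - C (c k) * (X (u i) - X (u j)) := by
        rw [← hcs k hk]; ring
      rw [hbk, coeff_sub, coeff_C_mul, map_sub]
      rw [map_mul]
      ring
    rw [Finset.sum_congr rfl this, Finset.sum_sub_distrib]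
    rw [← Finset.sum_mul, hz, zero_mul, sub_zero]
  have hconst : ∀ (d : Fin n →₀ ℕ) (u u' : Equiv.Perm (Fin n)),
      ∑ k ∈ s, lam k * C (coeff d (b k u)) = ∑ k ∈ s, lam k * C (coeff d (b k u')) :=
    fun d => const_of_edge_inv hΓ (fun u => ∑ k ∈ s, lam k * C (coeff d (b k u)))
      (fun u i j hadj => hedge d u i j hadj)
  apply MvPolynomial.ext
  intro d
  have hkey : ∀ u : Equiv.Perm (Fin n),
      coeff d (∑ k ∈ s, coeff μ (lam k) • b k u)
        = coeff μ (∑ k ∈ s, lam k * C (coeff d (b k u))) := by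
    intro u
    rw [coeff_sum, coeff_sum]
    refine Finset.sum_congr rfl fun k _ => ?_
    rw [coeff_smul, mul_comm (lam k), coeff_C_mul]
    rw [smul_eq_mul, mul_comm]
  rw [hkey w, hkey w', hconst d w w']


lemma core (hΓ : Γ.Connected) {κ : Type*}
    (B : Submodule ℂ (Equiv.Perm (Fin n) → MvPolynomial (Fin n) ℂ))
    (hBS : B ≤ splineSub Γ) (hBD : constSub n ⊓ B = ⊥)
    (vB : κ → (Equiv.Perm (Fin n) → MvPolynomial (Fin n) ℂ))
    (hli : LinearIndependent ℂ vB) (hvB : ∀ k, vB k ∈ B)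
    (s : Finset κ) (f : MvPolynomial (Fin n) ℂ) (lam : κ → MvPolynomial (Fin n) ℂ)
    (hrel : f • (1 : Equiv.Perm (Fin n) → MvPolynomial (Fin n) ℂ)
      + ∑ k ∈ s, lam k • vB k = 0) :
    f = 0 ∧ ∀ k ∈ s, lam k = 0 := by
  classical
  have hpt : ∀ w, f + ∑ k ∈ s, lam k * vB k w = 0 := by
    intro w
    have := congrFun hrel w
    simpa [Finset.sum_apply, smul_eq_mul] using this
  have hsplines : ∀ k ∈ s, vB k ∈ splineSub Γ := fun k _ => hBS (hvB k)
  have hlam : ∀ k ∈ s, lam k = 0 := by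
    intro k hk
    apply MvPolynomial.ext
    intro μ
    rw [coeff_zero]
    set ρμ : Equiv.Perm (Fin n) → MvPolynomial (Fin n) ℂ :=
      ∑ k ∈ s, coeff μ (lam k) • vB k with hρμ
    have hρapp : ∀ w, ρμ w = ∑ k ∈ s, coeff μ (lam k) • vB k w := by
      intro w
      rw [hρμ, Finset.sum_apply]
      exact Finset.sum_congr rfl fun k _ => rfl
    have hρconst : ∀ w, ρμ w = ρμ 1 := by
      intro w
      rw [hρapp w, hρapp 1]
      exact slice_const hΓ s vB hsplines f lam hpt μ w 1
    have hρS : ρμ ∈ splineSub Γ :=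
      Submodule.sum_mem _ fun k hk => Submodule.smul_mem _ _ (hsplines k hk)
    have hρD : ρμ ∈ constSub n := by
      have heq : ρμ = (fun _ => ρμ 1) := funext fun w => hρconst w
      rw [heq]
      exact const_mem_constSub (hρS.2 1)
    have hρB : ρμ ∈ B := Submodule.sum_mem _ fun k _ => Submodule.smul_mem _ _ (hvB k)
    have hρ0 : ρμ = 0 := by
      have hmem : ρμ ∈ constSub n ⊓ B := ⟨hρD, hρB⟩
      rw [hBD] at hmem
      simpa using hmem
    exact linearIndependent_iff'.mp hli s (fun k => coeff μ (lam k)) hρ0 k hk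
  refine ⟨?_, hlam⟩
  have h1 := hpt 1
  rw [Finset.sum_eq_zero (fun k hk => by rw [hlam k hk, zero_mul]), add_zero] at h1
  exact h1


theorem span_linear_splines_free' {n : ℕ} (Γ : SimpleGraph (Fin n)) (hΓ : Γ.Connected) :
    Module.Free (MvPolynomial (Fin n) ℂ)
      ↥(Submodule.span (MvPolynomial (Fin n) ℂ)
        ((splineSub Γ : Set (Equiv.Perm (Fin n) → MvPolynomial (Fin n) ℂ)))) := by
  classical
  obtain ⟨Bc, hBc⟩ := Submodule.exists_isCompl
    ((constSub n).comap (splineSub Γ).subtype)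
  set B := Bc.map (splineSub Γ).subtype with hB
  have hBS : B ≤ splineSub Γ := Submodule.map_subtype_le _ _
  have hDS : constSub n ≤ splineSub Γ := constSub_le Γ
  have hmapD : ((constSub n).comap (splineSub Γ).subtype).map
      (splineSub Γ).subtype = constSub n := by
    rw [Submodule.map_comap_subtype, inf_eq_right.mpr hDS]
  have hsup : constSub n ⊔ B = splineSub Γ := by
    have h := congrArg (Submodule.map (splineSub Γ).subtype) hBc.sup_eq_top
    rwa [Submodule.map_sup, hmapD, Submodule.map_top, Submodule.range_subtype] at h
  have hinf : constSub n ⊓ B = ⊥ := by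
    have h := congrArg (Submodule.map (splineSub Γ).subtype) hBc.inf_eq_bot
    rwa [Submodule.map_inf _ (Submodule.injective_subtype _), hmapD, Submodule.map_bot] at h
  let bB := Module.Basis.ofVectorSpace ℂ ↥B
  let vB : _ → (Equiv.Perm (Fin n) → MvPolynomial (Fin n) ℂ) := fun k => ((bB k : ↥B) : _)
  have hli : LinearIndependent ℂ vB :=
    bB.linearIndependent.map' B.subtype (Submodule.ker_subtype B)
  have hvB : ∀ k, vB k ∈ B := fun k => (bB k).2
  have hBspan : Submodule.span ℂ (Set.range vB) = B := by
    have h := congrArg (Submodule.map B.subtype) bB.span_eq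
    rw [Submodule.map_span, Submodule.map_top, Submodule.range_subtype] at h
    rw [show Set.range vB = ⇑B.subtype '' Set.range ⇑bB from by
      rw [← Set.range_comp]; rfl]
    exact h
  let v : Option _ → (Equiv.Perm (Fin n) → MvPolynomial (Fin n) ℂ) :=
    fun o => o.elim 1 vB
  have hliR : LinearIndependent (MvPolynomial (Fin n) ℂ) v := by
    rw [linearIndependent_iff']
    intro t g hg
    set s : Finset _ := t.eraseNone with hs
    set f : MvPolynomial (Fin n) ℂ := if none ∈ t then g none else 0 with hf
    set lam : _ → MvPolynomial (Fin n) ℂ :=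
      fun k => if some k ∈ t then g (some k) else 0 with hlamdef
    have himg : ∑ k ∈ s, lam k • vB k = ∑ i ∈ s.image some, g i • v i := by
      rw [Finset.sum_image (fun x _ y _ h => Option.some_injective _ h)]
      refine Finset.sum_congr rfl fun k hk => ?_
      rw [hlamdef]
      simp only [if_pos (Finset.mem_eraseNone.mp hk)]
      rfl
    have hkey : f • (1 : Equiv.Perm (Fin n) → MvPolynomial (Fin n) ℂ)
        + ∑ k ∈ s, lam k • vB k = 0 := by
      rw [himg]
      by_cases hn : none ∈ t
      · have ht : t = insert none (s.image some) := by
          ext o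
          rw [Finset.mem_insert]
          cases o with
          | none => exact ⟨fun _ => Or.inl rfl, fun _ => hn⟩
          | some k =>
            rw [Finset.mem_image]
            constructor
            · intro h
              exact Or.inr ⟨k, Finset.mem_eraseNone.mpr h, rfl⟩
            · rintro (h | ⟨a, ha, hak⟩)
              · exact (Option.some_ne_none k h).elim
              · cases Option.some.inj hak
                exact Finset.mem_eraseNone.mp ha
        have hnm : none ∉ s.image some := by
          intro hmem
          obtain ⟨a, -, hak⟩ := Finset.mem_image.mp hmem
          exact Option.some_ne_none a hak
        rw [ht, Finset.sum_insert hnm] at hg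
        rw [hf, if_pos hn]
        exact hg
      · have ht : t = s.image some := by
          ext o
          rw [Finset.mem_image]
          cases o with
          | none =>
            refine ⟨fun h => absurd h hn, ?_⟩
            rintro ⟨a, -, hak⟩
            exact (Option.some_ne_none a hak).elim
          | some k =>
            constructor
            · intro h
              exact ⟨k, Finset.mem_eraseNone.mpr h, rfl⟩
            · rintro ⟨a, ha, hak⟩
              cases Option.some.inj hak
              exact Finset.mem_eraseNone.mp ha
        rw [ht] at hg
        rw [hf, if_neg hn, zero_smul, zero_add]
        exact hg
    obtain ⟨hf0, hlam0⟩ := core hΓ B hBS hinf vB hli hvB s f lam hkey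
    intro i hit
    cases i with
    | none =>
      have : f = g none := by rw [hf, if_pos hit]
      rw [← this]; exact hf0
    | some k =>
      have hks : k ∈ s := Finset.mem_eraseNone.mpr hit
      have : lam k = g (some k) := by rw [hlamdef]; simp only [if_pos hit]
      rw [← this]; exact hlam0 k hks
  have hsp : Submodule.span (MvPolynomial (Fin n) ℂ)
        ((splineSub Γ : Set (Equiv.Perm (Fin n) → MvPolynomial (Fin n) ℂ)))
      = Submodule.span (MvPolynomial (Fin n) ℂ) (Set.range v) := by
    apply le_antisymm
    · rw [Submodule.span_le]
      intro ρ hρ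
      have hρ' : ρ ∈ splineSub Γ := hρ
      rw [← hsup] at hρ'
      obtain ⟨d, hd, bb, hbb, rfl⟩ := Submodule.mem_sup.mp hρ'
      refine Submodule.add_mem _ ?_ ?_
      · have hDle : constSub n
            ≤ (Submodule.span (MvPolynomial (Fin n) ℂ) (Set.range v)).restrictScalars ℂ := by
          rw [constSub, Submodule.span_le]
          rintro x (rfl | ⟨m, rfl⟩)
          · exact Submodule.subset_span ⟨none, rfl⟩
          · have hx : (fun _ => X m : Equiv.Perm (Fin n) → MvPolynomial (Fin n) ℂ)
                = (X m : MvPolynomial (Fin n) ℂ)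
                  • (1 : Equiv.Perm (Fin n) → MvPolynomial (Fin n) ℂ) := by
              funext w
              simp
            show (fun _ => X m : Equiv.Perm (Fin n) → MvPolynomial (Fin n) ℂ)
              ∈ (Submodule.restrictScalars ℂ
                (Submodule.span (MvPolynomial (Fin n) ℂ) (Set.range v)))
            rw [hx]
            have h1W : (1 : Equiv.Perm (Fin n) → MvPolynomial (Fin n) ℂ)
                ∈ Submodule.span (MvPolynomial (Fin n) ℂ) (Set.range v) :=
              Submodule.subset_span ⟨none, rfl⟩
            exact Submodule.smul_mem
              (Submodule.span (MvPolynomial (Fin n) ℂ) (Set.range v)) (X m) h1W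
        exact hDle hd
      · have h1 : bb ∈ Submodule.span ℂ (Set.range vB) := by rw [hBspan]; exact hbb
        have h3 : bb ∈ Submodule.span (MvPolynomial (Fin n) ℂ) (Set.range vB) :=
          Submodule.span_le_restrictScalars ℂ (MvPolynomial (Fin n) ℂ) (Set.range vB) h1
        refine Submodule.span_mono ?_ h3
        rintro x ⟨k, rfl⟩
        exact ⟨some k, rfl⟩
    · rw [Submodule.span_le]
      rintro x ⟨o, rfl⟩
      cases o with
      | none => exact Submodule.subset_span (one_mem_splineSub Γ)
      | some k => exact Submodule.subset_span (hBS (hvB k))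
  rw [hsp]
  exact Module.Free.of_basis (Module.Basis.span hliR)

end SplineFree

/-- For a connected graph `Γ` on `[n]`, the `ℂ[t]`-submodule of splines generated (under the
left action, i.e. the pointwise module structure) by the splines all of whose values have
degree at most `1` is a free `ℂ[t]`-module. -/
theorem span_linear_splines_free {n : ℕ} (Γ : SimpleGraph (Fin n)) (hΓ : Γ.Connected) :
    Module.Free (MvPolynomial (Fin n) ℂ)
      ↥(Submodule.span (MvPolynomial (Fin n) ℂ)
        {ρ : Equiv.Perm (Fin n) → MvPolynomial (Fin n) ℂ |
          IsSpline Γ ρ ∧ ∀ w, (ρ w).totalDegree ≤ 1}) := by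
  have hEq : {ρ : Equiv.Perm (Fin n) → MvPolynomial (Fin n) ℂ |
      IsSpline Γ ρ ∧ ∀ w, (ρ w).totalDegree ≤ 1}
      = ((SplineFree.splineSub Γ : Set (Equiv.Perm (Fin n) → MvPolynomial (Fin n) ℂ))) := rfl
  rw [hEq]
  exact SplineFree.span_linear_splines_free' Γ hΓ
end

section
/- Let Γ be a connected simple graph on [n], let T be a spanning tree of Γ, and let B ⊆ E(T). For w ∈ S_n, let I_B^w denote the ideal of ℂ[t] generated by {t_{w(i)} − t_{w(j)} : {i,j} ∈ B}, and let ⟨B⟩ denote the subgroup of S_n generated by the transpositions corresponding to edges of B. If v ∈ w⟨B⟩ and ρ is a spline on Γ, then ρ(w) − ρ(v) ∈ I_B^w. -/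
open MvPolynomial

/-- Let `T` be a spanning tree of the connected graph `Γ` and `B` a set of edges of `T`
(recorded as ordered pairs of adjacent vertices). If `v` lies in the left coset `w⟨B⟩` of
the reflection subgroup generated by the transpositions in `B`, then for any spline `ρ` on
`Γ` we have `ρ(w) − ρ(v) ∈ I_B^w = ⟨t_{w(i)} − t_{w(j)} : (i,j) ∈ B⟩`. -/
theorem spline_diff_mem_coset_ideal {n : ℕ} (Γ T : SimpleGraph (Fin n))
    (hΓ : Γ.Connected) (hTΓ : T ≤ Γ) (hT : T.IsTree)
    (B : Set (Fin n × Fin n)) (hB : ∀ p ∈ B, T.Adj p.1 p.2)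
    (ρ : Equiv.Perm (Fin n) → MvPolynomial (Fin n) ℂ) (hρ : IsSpline Γ ρ)
    (w v : Equiv.Perm (Fin n))
    (hv : w⁻¹ * v ∈ Subgroup.closure
      {σ : Equiv.Perm (Fin n) | ∃ p ∈ B, σ = Equiv.swap p.1 p.2}) :
    ρ w - ρ v ∈ Ideal.span
      {f : MvPolynomial (Fin n) ℂ | ∃ p ∈ B, f = X (w p.1) - X (w p.2)} := by
  set I : Ideal (MvPolynomial (Fin n) ℂ) :=
    Ideal.span {f : MvPolynomial (Fin n) ℂ | ∃ p ∈ B, f = X (w p.1) - X (w p.2)} with hI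
  set S : Set (Equiv.Perm (Fin n)) :=
    {σ : Equiv.Perm (Fin n) | ∃ p ∈ B, σ = Equiv.swap p.1 p.2} with hS
  -- auxiliary: for g in the closure, X (w (g k)) - X (w k) ∈ I for all k
  have aux : ∀ g ∈ Subgroup.closure S, ∀ k : Fin n,
      (X (w (g k)) - X (w k) : MvPolynomial (Fin n) ℂ) ∈ I := by
    intro g hg
    induction hg using Subgroup.closure_induction with
    | mem σ hσ =>
      obtain ⟨p, hp, rfl⟩ := hσ
      intro k
      rcases eq_or_ne k p.1 with rfl | h1
      · rw [Equiv.swap_apply_left]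
        have : (X (w p.1) - X (w p.2) : MvPolynomial (Fin n) ℂ) ∈ I :=
          Ideal.subset_span ⟨p, hp, rfl⟩
        simpa using I.neg_mem this
      rcases eq_or_ne k p.2 with rfl | h2
      · rw [Equiv.swap_apply_right]
        exact Ideal.subset_span ⟨p, hp, rfl⟩
      · rw [Equiv.swap_apply_of_ne_of_ne h1 h2]
        simp
    | one => intro k; simp
    | mul g₁ g₂ _ _ h₁ h₂ =>
      intro k
      have : (X (w ((g₁ * g₂) k)) - X (w k) : MvPolynomial (Fin n) ℂ) =
          (X (w (g₁ (g₂ k))) - X (w (g₂ k))) + (X (w (g₂ k)) - X (w k)) := by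
        simp [Equiv.Perm.mul_apply]
      rw [this]
      exact I.add_mem (h₁ _) (h₂ _)
    | inv g hg h =>
      intro k
      have : (X (w (g⁻¹ k)) - X (w k) : MvPolynomial (Fin n) ℂ) =
          -(X (w (g (g⁻¹ k))) - X (w (g⁻¹ k))) := by
        simp
      rw [this]
      exact I.neg_mem (h _)
  -- main induction
  have main : ∀ g ∈ Subgroup.closure S, ∀ u : Equiv.Perm (Fin n),
      (∀ k : Fin n, (X (u k) - X (w k) : MvPolynomial (Fin n) ℂ) ∈ I) →
      ρ u - ρ (u * g) ∈ I := by
    intro g hg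
    induction hg using Subgroup.closure_induction with
    | mem σ hσ =>
      obtain ⟨p, hp, rfl⟩ := hσ
      intro u hu
      have hadj : Γ.Adj p.1 p.2 := hTΓ (hB p hp)
      have hsp := hρ u p.1 p.2 hadj
      have hgen : (X (u p.1) - X (u p.2) : MvPolynomial (Fin n) ℂ) ∈ I := by
        have : (X (u p.1) - X (u p.2) : MvPolynomial (Fin n) ℂ) =
            (X (u p.1) - X (w p.1)) - (X (u p.2) - X (w p.2))
              + (X (w p.1) - X (w p.2)) := by ring
        rw [this]
        exact I.add_mem (I.sub_mem (hu p.1) (hu p.2))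
          (Ideal.subset_span ⟨p, hp, rfl⟩)
      have hle : Ideal.span {(X (u p.1) - X (u p.2) : MvPolynomial (Fin n) ℂ)} ≤ I := by
        rw [Ideal.span_le, Set.singleton_subset_iff]; exact hgen
      exact hle hsp
    | one => intro u hu; simp
    | mul g₁ g₂ hg₁ hg₂ h₁ h₂ =>
      intro u hu
      have e1 := h₁ u hu
      have e2 : ρ (u * g₁) - ρ (u * g₁ * g₂) ∈ I := by
        apply h₂ (u * g₁)
        intro k
        have : (X ((u * g₁) k) - X (w k) : MvPolynomial (Fin n) ℂ) =
            (X (u (g₁ k)) - X (w (g₁ k))) + (X (w (g₁ k)) - X (w k)) := by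
          simp [Equiv.Perm.mul_apply]
        rw [this]
        exact I.add_mem (hu (g₁ k)) (aux g₁ hg₁ k)
      have : ρ u - ρ (u * (g₁ * g₂)) = (ρ u - ρ (u * g₁)) + (ρ (u * g₁) - ρ (u * g₁ * g₂)) := by
        rw [mul_assoc]; ring
      rw [this]
      exact I.add_mem e1 e2
    | inv g hg h =>
      intro u hu
      have hu' : ∀ k : Fin n, (X ((u * g⁻¹) k) - X (w k) : MvPolynomial (Fin n) ℂ) ∈ I := by
        intro k
        have hginv : g⁻¹ ∈ Subgroup.closure S := (Subgroup.closure S).inv_mem hg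
        have : (X ((u * g⁻¹) k) - X (w k) : MvPolynomial (Fin n) ℂ) =
            (X (u (g⁻¹ k)) - X (w (g⁻¹ k))) + (X (w (g⁻¹ k)) - X (w k)) := by
          simp [Equiv.Perm.mul_apply]
        rw [this]
        exact I.add_mem (hu (g⁻¹ k)) (aux g⁻¹ hginv k)
      have := h (u * g⁻¹) hu'
      rw [mul_assoc, inv_mul_cancel, mul_one] at this
      have e : ρ u - ρ (u * g⁻¹) = -(ρ (u * g⁻¹) - ρ u) := by ring
      rw [e]
      exact I.neg_mem this
  have := main (w⁻¹ * v) hv w (fun k => by simp)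
  rwa [mul_inv_cancel_left] at this
end

section
/- Let Γ be a tree on [n] with edge set E. For B ⊆ E, the coset spline at the identity f̄_e^B and the coset spline at w, f̄_w^B := w · f̄_e^B (dot action), satisfy: (a) f̄_w^B is a spline on Γ for every w ∈ S_n and every B ⊆ E; and (b) if w⟨B⟩ = v⟨B⟩ (equal left cosets of the subgroup ⟨B⟩ generated by the transpositions in B), then f̄_w^B = f̄_v^B. -/
open MvPolynomial

open Classical in
/-- The edges of `Γ`, recorded as ordered pairs `(i,j)` with `i < j`. -/
noncomputable def orderedEdges {n : ℕ} (Γ : SimpleGraph (Fin n)) :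
    Finset (Fin n × Fin n) :=
  Finset.univ.filter fun p => Γ.Adj p.1 p.2 ∧ p.1 < p.2

/-- The subgroup `⟨B⟩` of `S_n` generated by the transpositions corresponding to the
edges in `B`. -/
def edgeSubgroup {n : ℕ} (B : Finset (Fin n × Fin n)) : Subgroup (Equiv.Perm (Fin n)) :=
  Subgroup.closure {σ : Equiv.Perm (Fin n) | ∃ p ∈ B, σ = Equiv.swap p.1 p.2}

open Classical in
/-- The coset spline at the identity for `B ⊆ E(Γ)`:
`f̄_e^B(w) = ∏_{(i,j) ∈ E∖B, i<j} (t_{w(i)} − t_{w(j)})` if `w ∈ ⟨B⟩`, else `0`. -/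
noncomputable def cosetSplineId {n : ℕ} (Γ : SimpleGraph (Fin n))
    (B : Finset (Fin n × Fin n)) :
    Equiv.Perm (Fin n) → MvPolynomial (Fin n) ℂ := fun w =>
  if w ∈ edgeSubgroup B then
    ∏ p ∈ orderedEdges Γ \ B, (X (w p.1) - X (w p.2))
  else 0

/-- The coset spline at `w`: `f̄_w^B = w · f̄_e^B`. -/
noncomputable def cosetSpline {n : ℕ} (Γ : SimpleGraph (Fin n))
    (w : Equiv.Perm (Fin n)) (B : Finset (Fin n × Fin n)) :
    Equiv.Perm (Fin n) → MvPolynomial (Fin n) ℂ :=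
  dotAction w (cosetSplineId Γ B)

/-- The big product `∏_{(i,j) ∈ E∖B} (X i − X j)`. -/
noncomputable def edgeProd {n : ℕ} (Γ : SimpleGraph (Fin n))
    (B : Finset (Fin n × Fin n)) : MvPolynomial (Fin n) ℂ :=
  ∏ p ∈ orderedEdges Γ \ B, (X p.1 - X p.2)

lemma cosetSplineId_of_mem {n : ℕ} (Γ : SimpleGraph (Fin n)) (B : Finset (Fin n × Fin n))
    (u : Equiv.Perm (Fin n)) (hu : u ∈ edgeSubgroup B) :
    cosetSplineId Γ B u = rename (⇑u) (edgeProd Γ B) := by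
  classical
  rw [cosetSplineId, edgeProd, map_prod]
  simp only [hu, if_true, map_sub, rename_X]

lemma cosetSplineId_of_not_mem {n : ℕ} (Γ : SimpleGraph (Fin n)) (B : Finset (Fin n × Fin n))
    (u : Equiv.Perm (Fin n)) (hu : u ∉ edgeSubgroup B) :
    cosetSplineId Γ B u = 0 := by
  rw [cosetSplineId, if_neg hu]

lemma swap_sub_dvd {n : ℕ} (i j : Fin n) (r : MvPolynomial (Fin n) ℂ) :
    (X i - X j : MvPolynomial (Fin n) ℂ) ∣ r - rename (⇑(Equiv.swap i j)) r := by
  rw [← Ideal.mem_span_singleton, ← Ideal.Quotient.eq]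
  have key : (Ideal.Quotient.mkₐ ℂ
      (Ideal.span {(X i - X j : MvPolynomial (Fin n) ℂ)})).comp
      (rename (⇑(Equiv.swap i j))) =
      Ideal.Quotient.mkₐ ℂ (Ideal.span {(X i - X j : MvPolynomial (Fin n) ℂ)}) := by
    apply MvPolynomial.algHom_ext
    intro k
    simp only [AlgHom.comp_apply, rename_X, Ideal.Quotient.mkₐ_eq_mk]
    rcases eq_or_ne k i with rfl | hi
    · rw [Equiv.swap_apply_left, Ideal.Quotient.eq]
      have h : (X j - X k : MvPolynomial (Fin n) ℂ) = -(X k - X j) := by ring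
      rw [h]
      exact neg_mem (Ideal.subset_span (Set.mem_singleton _))
    rcases eq_or_ne k j with rfl | hj
    · rw [Equiv.swap_apply_right, Ideal.Quotient.eq]
      exact Ideal.subset_span (Set.mem_singleton _)
    · rw [Equiv.swap_apply_of_ne_of_ne hi hj]
  calc Ideal.Quotient.mk _ r
      = Ideal.Quotient.mkₐ ℂ _ r := rfl
    _ = (Ideal.Quotient.mkₐ ℂ _).comp (rename (⇑(Equiv.swap i j))) r := by rw [key]
    _ = Ideal.Quotient.mk _ (rename (⇑(Equiv.swap i j)) r) := rfl

lemma edgeProd_factor_dvd {n : ℕ} (Γ : SimpleGraph (Fin n)) (B : Finset (Fin n × Fin n))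
    (a b : Fin n) (hab : (a, b) ∈ orderedEdges Γ \ B) (v : Equiv.Perm (Fin n)) :
    (X (v a) - X (v b) : MvPolynomial (Fin n) ℂ) ∣ rename (⇑v) (edgeProd Γ B) := by
  have h1 : (X a - X b : MvPolynomial (Fin n) ℂ) ∣ edgeProd Γ B := by
    rw [edgeProd, ← Finset.mul_prod_erase _ _ hab]
    exact dvd_mul_right _ _
  have h2 := map_dvd (rename (⇑v) : MvPolynomial (Fin n) ℂ →ₐ[ℂ] MvPolynomial (Fin n) ℂ) h1
  simpa using h2

lemma cosetSplineId_spline_dvd {n : ℕ} (Γ : SimpleGraph (Fin n))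
    (B : Finset (Fin n × Fin n)) (u : Equiv.Perm (Fin n)) (i j : Fin n)
    (hadj : Γ.Adj i j) :
    (X (u i) - X (u j) : MvPolynomial (Fin n) ℂ) ∣
      cosetSplineId Γ B u - cosetSplineId Γ B (u * Equiv.swap i j) := by
  classical
  set s := Equiv.swap i j with hs
  by_cases hsB : s ∈ edgeSubgroup B
  · have hiff : u * s ∈ edgeSubgroup B ↔ u ∈ edgeSubgroup B := by
      constructor
      · intro h
        have h2 := mul_mem h (inv_mem hsB)
        simpa [mul_assoc] using h2
      · intro h; exact mul_mem h hsB
    by_cases hu : u ∈ edgeSubgroup B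
    · rw [cosetSplineId_of_mem Γ B u hu, cosetSplineId_of_mem Γ B _ (hiff.mpr hu)]
      have hcomp : rename (⇑(u * s)) (edgeProd Γ B)
          = rename (⇑u) (rename (⇑s) (edgeProd Γ B)) := by
        rw [rename_rename]; rfl
      rw [hcomp, ← map_sub]
      have h2 := map_dvd
        (rename (⇑u) : MvPolynomial (Fin n) ℂ →ₐ[ℂ] MvPolynomial (Fin n) ℂ)
        (swap_sub_dvd i j (edgeProd Γ B))
      simpa using h2
    · rw [cosetSplineId_of_not_mem Γ B u hu,
        cosetSplineId_of_not_mem Γ B _ (fun h => hu (hiff.mp h))]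
      simp
  · have hne : i ≠ j := hadj.ne
    have hEB : ((i, j) ∈ orderedEdges Γ \ B) ∨ ((j, i) ∈ orderedEdges Γ \ B) := by
      rcases lt_or_gt_of_ne hne with hlt | hgt
      · left
        refine Finset.mem_sdiff.mpr ⟨?_, fun h => hsB ?_⟩
        · simp [orderedEdges, hadj, hlt]
        · exact Subgroup.subset_closure ⟨(i, j), h, rfl⟩
      · right
        refine Finset.mem_sdiff.mpr ⟨?_, fun h => hsB ?_⟩
        · simp [orderedEdges, hadj.symm, hgt]
        · rw [hs, Equiv.swap_comm i j]
          exact Subgroup.subset_closure ⟨(j, i), h, rfl⟩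
    have hdvdq : ∀ v : Equiv.Perm (Fin n),
        (X (v i) - X (v j) : MvPolynomial (Fin n) ℂ) ∣ rename (⇑v) (edgeProd Γ B) := by
      intro v
      rcases hEB with h | h
      · exact edgeProd_factor_dvd Γ B i j h v
      · have h2 := edgeProd_factor_dvd Γ B j i h v
        have hneg : (X (v i) - X (v j) : MvPolynomial (Fin n) ℂ)
            = -(X (v j) - X (v i)) := by ring
        rw [hneg, neg_dvd]
        exact h2
    by_cases hu : u ∈ edgeSubgroup B
    · have hus : u * s ∉ edgeSubgroup B := fun h =>
        hsB (by simpa [mul_assoc] using mul_mem (inv_mem hu) h)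
      rw [cosetSplineId_of_mem Γ B u hu, cosetSplineId_of_not_mem Γ B _ hus, sub_zero]
      exact hdvdq u
    · by_cases hus : u * s ∈ edgeSubgroup B
      · rw [cosetSplineId_of_not_mem Γ B u hu, cosetSplineId_of_mem Γ B _ hus,
          zero_sub, dvd_neg]
        have h2 := hdvdq (u * s)
        have e1 : (u * s) i = u j := by simp [hs, Equiv.Perm.mul_apply]
        have e2 : (u * s) j = u i := by simp [hs, Equiv.Perm.mul_apply]
        rw [e1, e2] at h2
        have hneg : (X (u i) - X (u j) : MvPolynomial (Fin n) ℂ)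
            = -(X (u j) - X (u i)) := by ring
        rw [hneg, neg_dvd]
        exact h2
      · rw [cosetSplineId_of_not_mem Γ B u hu, cosetSplineId_of_not_mem Γ B _ hus]
        simp

/-- If `Γ` is a tree, then (a) every coset spline `f̄_w^B` is a spline on `Γ`, and (b) the
coset spline depends only on the left coset: if `w⟨B⟩ = v⟨B⟩` then `f̄_w^B = f̄_v^B`. -/
theorem cosetSpline_isSpline_and_coset_invariant {n : ℕ} (Γ : SimpleGraph (Fin n))
    (hT : Γ.IsTree) (B : Finset (Fin n × Fin n)) (hB : B ⊆ orderedEdges Γ) :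
    (∀ w : Equiv.Perm (Fin n), IsSpline Γ (cosetSpline Γ w B)) ∧
    (∀ w v : Equiv.Perm (Fin n), w⁻¹ * v ∈ edgeSubgroup B →
      cosetSpline Γ w B = cosetSpline Γ v B) := by
  constructor
  · -- part (a)
    intro w u i j hadj
    rw [Ideal.mem_span_singleton]
    show (X (u i) - X (u j) : MvPolynomial (Fin n) ℂ) ∣
      rename (⇑w) (cosetSplineId Γ B (w⁻¹ * u))
        - rename (⇑w) (cosetSplineId Γ B (w⁻¹ * (u * Equiv.swap i j)))
    rw [← map_sub, show w⁻¹ * (u * Equiv.swap i j) = (w⁻¹ * u) * Equiv.swap i j from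
      (mul_assoc _ _ _).symm]
    have h2 := map_dvd (rename (⇑w) : MvPolynomial (Fin n) ℂ →ₐ[ℂ] MvPolynomial (Fin n) ℂ)
      (cosetSplineId_spline_dvd Γ B (w⁻¹ * u) i j hadj)
    have e2 : w ((w⁻¹ * u) i) = u i := by simp [Equiv.Perm.mul_apply]
    have e3 : w ((w⁻¹ * u) j) = u j := by simp [Equiv.Perm.mul_apply]
    simpa [e2, e3] using h2
  · -- part (b)
    intro w v hwv
    funext u
    show rename (⇑w) (cosetSplineId Γ B (w⁻¹ * u))
      = rename (⇑v) (cosetSplineId Γ B (v⁻¹ * u))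
    have hstep : cosetSplineId Γ B (w⁻¹ * u)
        = rename (⇑(w⁻¹ * v)) (cosetSplineId Γ B (v⁻¹ * u)) := by
      by_cases hv : v⁻¹ * u ∈ edgeSubgroup B
      · have hw : w⁻¹ * u ∈ edgeSubgroup B := by
          have h2 := mul_mem hwv hv
          simpa [mul_assoc] using h2
        rw [cosetSplineId_of_mem Γ B _ hv, cosetSplineId_of_mem Γ B _ hw, rename_rename]
        congr 1
        ext x
        simp [Equiv.Perm.mul_apply]
      · have hw : w⁻¹ * u ∉ edgeSubgroup B := by
          intro h
          apply hv
          have h2 := mul_mem (inv_mem hwv) h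
          simpa [mul_assoc] using h2
        rw [cosetSplineId_of_not_mem Γ B _ hv, cosetSplineId_of_not_mem Γ B _ hw]
        simp
    rw [hstep, rename_rename]
    congr 1
    ext x
    simp [Equiv.Perm.mul_apply]
end

section
/- Let Γ be a connected simple graph on [n]. (a) For every cut edge s = {i,j} of Γ with i < j, every choice of connected component G_s of the edge-deleted graph ([n], E(Γ)∖{s}), and every subset A ⊆ [n] with |A| = |V(G_s)|, the function f̄_A^s : S_n → ℂ[t] defined by f̄_A^s(w) = t_{w(i)} − t_{w(j)} if w⁻¹(A) = V(G_s) and 0 otherwise, is a spline on Γ. (b) For every cut vertex j of Γ, every connected component G of the induced subgraph Γ − j on [n]∖{j}, and every k ∈ [n], the function ȳ_{G,k}^j : S_n → ℂ[t] defined by ȳ_{G,k}^j(w) = t_k − t_{w(j)} if w⁻¹(k) ∈ G and 0 otherwise, is a spline on Γ. -/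
open MvPolynomial

/-- The graph obtained from `Γ` by deleting all edges incident to the vertex `j`
(so that the connected components of `Γ − j` are exactly the components of this graph other
than the isolated vertex `j`). -/
def delVertexEdges {n : ℕ} (Γ : SimpleGraph (Fin n)) (j : Fin n) : SimpleGraph (Fin n) :=
  Γ.deleteEdges {e : Sym2 (Fin n) | j ∈ e}

open Classical in
/-- The spline `f̄_A^s` associated to a cut edge `s = {i,j}` (with `i < j`), a chosen
connected component `G` of the edge-deleted graph, and a set `A` with `|A| = |V(G)|`. -/
noncomputable def fbar {n : ℕ} (i j : Fin n) (A : Set (Fin n)) (G : Set (Fin n)) :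
    Equiv.Perm (Fin n) → MvPolynomial (Fin n) ℂ := fun w =>
  if (⇑w) ⁻¹' A = G then X (w i) - X (w j) else 0

open Classical in
/-- The spline `ȳ_{G,k}^j` associated to a cut vertex `j`, a connected component `G` of
`Γ − j`, and `k ∈ [n]`. -/
noncomputable def ybar {n : ℕ} (j k : Fin n) (G : Set (Fin n)) :
    Equiv.Perm (Fin n) → MvPolynomial (Fin n) ℂ := fun w =>
  if w⁻¹ k ∈ G then X k - X (w j) else 0

lemma mem_span_swap {n : ℕ} (w : Equiv.Perm (Fin n)) (a b x : Fin n) :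
    (X (w x) - X (w (Equiv.swap a b x)) : MvPolynomial (Fin n) ℂ) ∈
      Ideal.span {(X (w a) - X (w b) : MvPolynomial (Fin n) ℂ)} := by
  rcases eq_or_ne x a with rfl | hxa
  · rw [Equiv.swap_apply_left]; exact Ideal.subset_span rfl
  rcases eq_or_ne x b with rfl | hxb
  · rw [Equiv.swap_apply_right]
    have h : (X (w a) - X (w x) : MvPolynomial (Fin n) ℂ) ∈
        Ideal.span {(X (w a) - X (w x) : MvPolynomial (Fin n) ℂ)} := Ideal.subset_span rfl
    simpa using neg_mem h
  · rw [Equiv.swap_apply_of_ne_of_ne hxa hxb, sub_self]; exact Ideal.zero_mem _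

lemma swap_preimage_eq {α : Type*} [DecidableEq α] (a b : α) (G : Set α)
    (h : a ∈ G ↔ b ∈ G) : (Equiv.swap a b) ⁻¹' G = G := by
  ext x
  simp only [Set.mem_preimage]
  rcases eq_or_ne x a with rfl | hxa
  · rw [Equiv.swap_apply_left]; exact h.symm
  rcases eq_or_ne x b with rfl | hxb
  · rw [Equiv.swap_apply_right]; exact h
  · rw [Equiv.swap_apply_of_ne_of_ne hxa hxb]

lemma pm_mem {R : Type*} [CommRing R] (p q : R) (h : p = q ∨ p = -q) :
    p ∈ Ideal.span {q} := by
  rcases h with rfl | rfl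
  · exact Ideal.subset_span rfl
  · exact neg_mem (Ideal.subset_span rfl)

/-- For a connected graph `Γ` on `[n]`:
(a) for every cut edge `{i,j}` (`i < j`), every connected component `G` of the edge-deleted
graph (the component of any vertex `v₀`), and every `A ⊆ [n]` with `|A| = |G|`, the
function `f̄_A^{(i,j)}` is a spline on `Γ`; and
(b) for every cut vertex `j`, every connected component `G` of `Γ − j` (the component of
any vertex `v₀ ≠ j`), and every `k`, the function `ȳ_{G,k}^j` is a spline on `Γ`. -/
theorem fbar_ybar_isSpline {n : ℕ} (Γ : SimpleGraph (Fin n)) (hΓ : Γ.Connected) :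
    (∀ i j : Fin n, i < j → Γ.Adj i j →
      ¬ (Γ.deleteEdges {s(i, j)}).Connected →
      ∀ v₀ : Fin n, ∀ A : Set (Fin n),
        A.ncard = {y | (Γ.deleteEdges {s(i, j)}).Reachable v₀ y}.ncard →
        IsSpline Γ (fbar i j A {y | (Γ.deleteEdges {s(i, j)}).Reachable v₀ y})) ∧
    (∀ j : Fin n, ¬ (Γ.induce ({j}ᶜ : Set (Fin n))).Connected →
      ∀ v₀ : Fin n, v₀ ≠ j → ∀ k : Fin n,
        IsSpline Γ (ybar j k {y | (delVertexEdges Γ j).Reachable v₀ y})) := by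
  constructor
  · intro i j hij hadjij hconn v₀ A hcard w a b hab
    set G := {y | (Γ.deleteEdges {s(i, j)}).Reachable v₀ y} with hG
    have hpre : (⇑(w * Equiv.swap a b)) ⁻¹' A = (Equiv.swap a b) ⁻¹' ((⇑w) ⁻¹' A) := by
      ext x; simp [Equiv.Perm.mul_apply]
    have cross : ¬ (a ∈ G ↔ b ∈ G) → s(a, b) = s(i, j) := by
      intro hone
      by_contra hne
      have hadj' : (Γ.deleteEdges {s(i, j)}).Adj a b := by
        rw [SimpleGraph.deleteEdges_adj]
        exact ⟨hab, by simpa using hne⟩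
      refine hone ⟨fun ha => ?_, fun hb => ?_⟩
      · exact SimpleGraph.Reachable.trans ha hadj'.reachable
      · exact SimpleGraph.Reachable.trans hb hadj'.symm.reachable
    simp only [fbar]
    by_cases h1 : (⇑w) ⁻¹' A = G <;> by_cases h2 : (⇑(w * Equiv.swap a b)) ⁻¹' A = G
    · rw [if_pos h1, if_pos h2]
      have h5 := Ideal.sub_mem _ (mem_span_swap w a b i) (mem_span_swap w a b j)
      convert h5 using 1
      simp only [Equiv.Perm.mul_apply]
      ring
    · rw [if_pos h1, if_neg h2]
      have hone : ¬ (a ∈ G ↔ b ∈ G) := by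
        intro hiff
        exact h2 (by rw [hpre, h1, swap_preimage_eq a b G hiff])
      rcases Sym2.eq_iff.mp (cross hone) with ⟨rfl, rfl⟩ | ⟨rfl, rfl⟩ <;>
        · apply pm_mem
          first
          | (left; ring1)
          | (right; ring1)
    · rw [if_neg h1, if_pos h2]
      have h2' : (Equiv.swap a b) ⁻¹' ((⇑w) ⁻¹' A) = G := by rw [← hpre]; exact h2
      have hone : ¬ (a ∈ G ↔ b ∈ G) := by
        intro hiff
        apply h1
        have hA : (⇑w) ⁻¹' A = (Equiv.swap a b) ⁻¹' G := by
          rw [← h2']; ext x; simp [Equiv.swap_apply_self]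
        rw [hA, swap_preimage_eq a b G hiff]
      rcases Sym2.eq_iff.mp (cross hone) with ⟨rfl, rfl⟩ | ⟨rfl, rfl⟩ <;>
        · simp only [Equiv.Perm.mul_apply, Equiv.swap_apply_left, Equiv.swap_apply_right]
          apply pm_mem
          first
          | (left; ring1)
          | (right; ring1)
    · rw [if_neg h1, if_neg h2]
      simpa using Ideal.zero_mem
        (Ideal.span {(X (w a) - X (w b) : MvPolynomial (Fin n) ℂ)})
  · intro j hconn v₀ hv₀ k w a b hab
    set G := {y | (delVertexEdges Γ j).Reachable v₀ y} with hG
    have hjG : j ∉ G := by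
      intro hj
      have hr : (delVertexEdges Γ j).Reachable j v₀ := SimpleGraph.Reachable.symm hj
      obtain ⟨p⟩ := hr
      cases p with
      | nil => exact hv₀ rfl
      | cons h' p' => simp [delVertexEdges, SimpleGraph.deleteEdges_adj] at h'
    have hinv : (w * Equiv.swap a b)⁻¹ k = (Equiv.swap a b) (w⁻¹ k) := by
      simp [mul_inv_rev, Equiv.swap_inv, Equiv.Perm.mul_apply]
    simp only [ybar]
    by_cases h1 : w⁻¹ k ∈ G <;> by_cases h2 : (w * Equiv.swap a b)⁻¹ k ∈ G
    · rw [if_pos h1, if_pos h2]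
      have h5 := neg_mem (mem_span_swap w a b j)
      convert h5 using 1
      simp only [Equiv.Perm.mul_apply]
      ring
    · rw [if_pos h1, if_neg h2]
      rw [hinv] at h2
      have hu : w⁻¹ k = a ∨ w⁻¹ k = b := by
        by_contra h; push_neg at h
        rw [Equiv.swap_apply_of_ne_of_ne h.1 h.2] at h2; exact h2 h1
      have hadj' : Γ.Adj (w⁻¹ k) (Equiv.swap a b (w⁻¹ k)) := by
        rcases hu with h | h <;> rw [h]
        · rw [Equiv.swap_apply_left]; exact hab
        · rw [Equiv.swap_apply_right]; exact hab.symm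
      have hj : j = Equiv.swap a b (w⁻¹ k) := by
        by_contra hne
        have huj : w⁻¹ k ≠ j := fun h => hjG (h ▸ h1)
        have hadj'' : (delVertexEdges Γ j).Adj (w⁻¹ k) (Equiv.swap a b (w⁻¹ k)) := by
          rw [delVertexEdges, SimpleGraph.deleteEdges_adj]
          refine ⟨hadj', ?_⟩
          intro hmem
          rw [Set.mem_setOf_eq, Sym2.mem_iff] at hmem
          rcases hmem with h | h
          · exact huj h.symm
          · exact hne h
        exact h2 (SimpleGraph.Reachable.trans h1 hadj''.reachable)
      have h5 := mem_span_swap w a b (w⁻¹ k)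
      rw [show w (w⁻¹ k) = k by simp] at h5
      rw [← hj] at h5
      simpa using h5
    · rw [if_neg h1, if_pos h2]
      rw [hinv] at h2
      have hu : w⁻¹ k = a ∨ w⁻¹ k = b := by
        by_contra h; push_neg at h
        rw [Equiv.swap_apply_of_ne_of_ne h.1 h.2] at h2; exact h1 h2
      have hadj' : Γ.Adj (Equiv.swap a b (w⁻¹ k)) (w⁻¹ k) := by
        rcases hu with h | h <;> rw [h]
        · rw [Equiv.swap_apply_left]; exact hab.symm
        · rw [Equiv.swap_apply_right]; exact hab
      have hj : j = w⁻¹ k := by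
        by_contra hne
        have hsj : Equiv.swap a b (w⁻¹ k) ≠ j := fun h => hjG (h ▸ h2)
        have hadj'' : (delVertexEdges Γ j).Adj (Equiv.swap a b (w⁻¹ k)) (w⁻¹ k) := by
          rw [delVertexEdges, SimpleGraph.deleteEdges_adj]
          refine ⟨hadj', ?_⟩
          intro hmem
          rw [Set.mem_setOf_eq, Sym2.mem_iff] at hmem
          rcases hmem with h | h
          · exact hsj h.symm
          · exact hne h
        exact h1 (SimpleGraph.Reachable.trans h2 hadj''.reachable)
      have h5 := neg_mem (mem_span_swap w a b (w⁻¹ k))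
      rw [show w (w⁻¹ k) = k by simp] at h5
      convert h5 using 1
      rw [Equiv.Perm.mul_apply, hj]
      ring
    · rw [if_neg h1, if_neg h2]
      simpa using Ideal.zero_mem
        (Ideal.span {(X (w a) - X (w b) : MvPolynomial (Fin n) ℂ)})
end

section
/- Let Γ be a connected simple graph on [n]. The following relations hold among splines on Γ (all sums of splines taken pointwise): (1) Σ_{r=1}^n x̄_r = Σ_{r=1}^n t̄_r. (2) If {i,j} is a cut edge of Γ with i < j and G_{(i,j)} is the connected component of ([n], E(Γ)∖{{i,j}}) containing i, then Σ_A f̄_A^{(i,j)} = x̄_i − x̄_j, the sum over all A ⊆ [n] with |A| = |V(G_{(i,j)})|. (3) If j is a cut vertex of Γ and G is a connected component of Γ − j, then Σ_{k=1}^n ȳ_{G,k}^j = (Σ_{r ∈ V(G)} x̄_r) − |V(G)|·x̄_j. (4) If j is a cut vertex of Γ and k ∈ [n] is fixed, then Σ_G ȳ_{G,k}^j = t̄_k − x̄_j, the sum over all connected components G of Γ − j. -/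
open MvPolynomial

/-- The spline with constant value `t_i`. -/
noncomputable def tbar {n : ℕ} (i : Fin n) :
    Equiv.Perm (Fin n) → MvPolynomial (Fin n) ℂ := fun _ => X i

/-- The spline `x̄_i : w ↦ t_{w(i)}`. -/
noncomputable def xbar {n : ℕ} (i : Fin n) :
    Equiv.Perm (Fin n) → MvPolynomial (Fin n) ℂ := fun w => X (w i)

open Classical in
private lemma isolated_lemma {n : ℕ} (Γ : SimpleGraph (Fin n)) (j v : Fin n)
    (h : (delVertexEdges Γ j).Reachable v j) : v = j := by
  obtain ⟨p⟩ := h.symm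
  cases p with
  | nil => rfl
  | cons h q =>
    rw [delVertexEdges, SimpleGraph.deleteEdges_adj] at h
    exact absurd (Sym2.mem_mk_left _ _) h.2

open Classical in
/-- The four basic linear relations among the splines `t̄`, `x̄`, `f̄`, `ȳ` on a connected
graph `Γ`:
(1) `Σ_r x̄_r = Σ_r t̄_r`;
(2) for a cut edge `{i,j}` (`i < j`) with `G` the component of the edge-deleted graph
containing `i`, `Σ_{|A| = |G|} f̄_A^{(i,j)} = x̄_i − x̄_j`;
(3) for a cut vertex `j` and a connected component `G` of `Γ − j`,
`Σ_k ȳ_{G,k}^j = (Σ_{r ∈ G} x̄_r) − |G|·x̄_j`;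
(4) for a cut vertex `j` and fixed `k`, the sum of `ȳ_{G,k}^j` over all connected
components `G` of `Γ − j` equals `t̄_k − x̄_j`. -/
theorem spline_linear_relations {n : ℕ} (Γ : SimpleGraph (Fin n)) (hΓ : Γ.Connected) :
    ((∑ r : Fin n, xbar r) = ∑ r : Fin n, tbar r) ∧
    (∀ i j : Fin n, i < j → Γ.Adj i j →
      ¬ (Γ.deleteEdges {s(i, j)}).Connected →
      (∑ A ∈ Finset.univ.filter (fun A : Finset (Fin n) =>
          A.card = {y | (Γ.deleteEdges {s(i, j)}).Reachable i y}.ncard),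
        fbar i j (↑A) {y | (Γ.deleteEdges {s(i, j)}).Reachable i y}) =
      xbar i - xbar j) ∧
    (∀ j : Fin n, ¬ (Γ.induce ({j}ᶜ : Set (Fin n))).Connected →
      ∀ v₀ : Fin n, v₀ ≠ j →
      (∑ k : Fin n, ybar j k {y | (delVertexEdges Γ j).Reachable v₀ y}) =
        (∑ r ∈ ({y | (delVertexEdges Γ j).Reachable v₀ y} : Set (Fin n)).toFinset, xbar r)
          - ({y | (delVertexEdges Γ j).Reachable v₀ y} : Set (Fin n)).ncard • xbar j) ∧
    (∀ j : Fin n, ¬ (Γ.induce ({j}ᶜ : Set (Fin n))).Connected →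
      ∀ k : Fin n, ∀ 𝒢 : Finset (Set (Fin n)),
        (∀ G : Set (Fin n), G ∈ 𝒢 ↔
          ∃ v₀ : Fin n, v₀ ≠ j ∧ G = {y | (delVertexEdges Γ j).Reachable v₀ y}) →
        (∑ G ∈ 𝒢, ybar j k G) = tbar k - xbar j) := by
  classical
  refine ⟨?_, ?_, ?_, ?_⟩
  · funext w
    simp only [Finset.sum_apply, xbar, tbar]
    exact Equiv.sum_comp w X
  · intro i j hij hadj hconn
    funext w
    set G : Set (Fin n) := {y | (Γ.deleteEdges {s(i, j)}).Reachable i y} with hG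
    simp only [Finset.sum_apply, fbar, Pi.sub_apply, xbar]
    rw [Finset.sum_eq_single_of_mem (G.toFinset.image w)]
    · rw [if_pos]
      rw [Finset.coe_image, Set.coe_toFinset, Set.preimage_image_eq _ w.injective]
    · simp only [Finset.mem_filter, Finset.mem_univ, true_and]
      rw [Finset.card_image_of_injective _ w.injective, ← Set.ncard_eq_toFinset_card']
    · intro A hA hne
      rw [if_neg]
      intro hAG
      apply hne
      apply Finset.coe_injective
      rw [Finset.coe_image, Set.coe_toFinset, ← hAG,
        Set.image_preimage_eq _ w.surjective]
  · intro j hcut v₀ hv₀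
    funext w
    simp only [Finset.sum_apply, ybar, Pi.sub_apply, Pi.smul_apply, xbar]
    refine Eq.trans (Fintype.sum_equiv w.symm _
      (fun r => if r ∈ {y | (delVertexEdges Γ j).Reachable v₀ y}
        then (X (w r) : MvPolynomial (Fin n) ℂ) - X (w j) else 0)
      (fun x => by simp [Equiv.Perm.inv_def])) ?_
    set G : Set (Fin n) := {y | (delVertexEdges Γ j).Reachable v₀ y} with hG
    have hfil : Finset.univ.filter (· ∈ G) = G.toFinset := by
      ext a; simp
    rw [← Finset.sum_filter, hfil, Finset.sum_sub_distrib, Finset.sum_const,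
      ← Set.ncard_eq_toFinset_card']
  · intro j hcut k 𝒢 h𝒢
    funext w
    simp only [Finset.sum_apply, ybar, Pi.sub_apply, tbar, xbar]
    by_cases hj : w⁻¹ k = j
    · have hk : k = w j := by rw [← hj, Equiv.Perm.coe_inv, Equiv.apply_symm_apply]
      rw [hk, sub_self]
      refine Finset.sum_eq_zero fun G hG => ?_
      rw [if_neg]
      obtain ⟨v₀, hv₀, rfl⟩ := (h𝒢 G).mp hG
      intro hmem
      rw [Equiv.Perm.coe_inv, Equiv.symm_apply_apply] at hmem
      exact hv₀ (isolated_lemma Γ j v₀ hmem)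
    · rw [Finset.sum_eq_single_of_mem {y | (delVertexEdges Γ j).Reachable (w⁻¹ k) y}]
      · rw [if_pos (show w⁻¹ k ∈ {y | (delVertexEdges Γ j).Reachable (w⁻¹ k) y} from
            SimpleGraph.Reachable.refl _)]
      · exact (h𝒢 _).mpr ⟨w⁻¹ k, hj, rfl⟩
      · intro G hG hne
        rw [if_neg]
        intro hmem
        obtain ⟨v₀, hv₀, rfl⟩ := (h𝒢 G).mp hG
        apply hne
        ext y
        simp only [Set.mem_setOf_eq] at *
        exact ⟨fun h => hmem.symm.trans h, fun h => hmem.trans h⟩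
end
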